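/- arXiv:2006.07673 — 3 statements merged into one kernel-verified Lean document; each statement's English description precedes it below -/
import Mathlib

section
/- For every real x in (0, π] and every positive integer m, the partial sum ∑_{j=1}^{m} sin(jx)/j is bounded in absolute value by π + 2. -/
open Real Finset

private lemma closed_form (x : ℝ) : ∀ k : ℕ,
    2 * Real.sin (x / 2) * (∑ i ∈ Finset.range k, Real.sin (i * x))
      = Real.cos (x / 2) - Real.cos (((k : ℝ) - 1 / 2) * x) := by
  intro k
  induction k with
  | zero =>
      rw [show (((0 : ℕ) : ℝ) - 1 / 2) * x = -(x / 2) by push_cast; ring, Real.cos_neg]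
      simp
  | succ k ih =>
      rw [Finset.sum_range_succ, mul_add, ih]
      have h : Real.cos (((k : ℝ) - 1 / 2) * x) - Real.cos (((k : ℝ) + 1 - 1 / 2) * x)
          = 2 * Real.sin (x / 2) * Real.sin ((k : ℝ) * x) := by
        rw [Real.cos_sub_cos,
            show ((((k : ℝ) - 1 / 2) * x + ((k : ℝ) + 1 - 1 / 2) * x)) / 2 = (k : ℝ) * x by ring,
            show ((((k : ℝ) - 1 / 2) * x - ((k : ℝ) + 1 - 1 / 2) * x)) / 2 = -(x / 2) by ring,
            Real.sin_neg]
        ring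
      push_cast
      linarith [h]

private lemma G_bound (x : ℝ) (hs : 0 < Real.sin (x / 2)) (k : ℕ) :
    |∑ i ∈ Finset.range k, Real.sin (i * x)| ≤ (Real.sin (x / 2))⁻¹ := by
  have h := closed_form x k
  have h1 : |Real.cos (x / 2) - Real.cos (((k : ℝ) - 1 / 2) * x)| ≤ 2 := by
    have a1 := Real.abs_cos_le_one (x / 2)
    have a2 := Real.abs_cos_le_one (((k : ℝ) - 1 / 2) * x)
    rw [abs_le] at a1 a2 ⊢
    constructor <;> linarith [a1.1, a1.2, a2.1, a2.2]
  have key : 2 * Real.sin (x / 2) * |∑ i ∈ Finset.range k, Real.sin (i * x)| ≤ 2 := by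
    calc 2 * Real.sin (x / 2) * |∑ i ∈ Finset.range k, Real.sin (i * x)|
        = |2 * Real.sin (x / 2) * (∑ i ∈ Finset.range k, Real.sin (i * x))| := by
          rw [abs_mul, abs_of_pos (by linarith : (0:ℝ) < 2 * Real.sin (x / 2))]
      _ ≤ 2 := by rw [h]; exact h1
  rw [inv_eq_one_div, le_div_iff₀ hs]
  linarith

private lemma telescope (a : ℕ) : ∀ b : ℕ, a ≤ b →
    ∑ i ∈ Finset.Ioc a b, (((i : ℝ))⁻¹ - ((i : ℝ) + 1)⁻¹)
      = ((a : ℝ) + 1)⁻¹ - ((b : ℝ) + 1)⁻¹ := by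
  intro b
  induction b with
  | zero => intro h; interval_cases a; simp
  | succ b ih =>
      intro h
      rcases Nat.lt_or_ge a (b + 1) with h' | h'
      · have hab : a ≤ b := Nat.lt_succ_iff.mp h'
        rw [Finset.sum_Ioc_succ_top hab, ih hab]
        push_cast
        ring
      · have : a = b + 1 := le_antisymm h h'
        subst this
        simp

private lemma tail_bound (x : ℝ) (M : ℝ) (hM : 0 ≤ M)
    (hG : ∀ k, |∑ i ∈ Finset.range k, Real.sin (i * x)| ≤ M)
    (n m : ℕ) (hn : 0 < n) (hnm : n < m) :
    |∑ j ∈ Finset.Ioc n m, Real.sin (j * x) / j| ≤ 2 * M / ((n : ℝ) + 1) := by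
  set G : ℕ → ℝ := fun k => ∑ i ∈ Finset.range k, Real.sin (i * x) with hGdef
  have key := Finset.sum_Ioc_by_parts (fun i : ℕ => ((i : ℝ))⁻¹)
    (fun i : ℕ => Real.sin (i * x)) hnm
  simp only [smul_eq_mul] at key
  have hsum : ∑ j ∈ Finset.Ioc n m, Real.sin (j * x) / j
      = ∑ j ∈ Finset.Ioc n m, ((j : ℝ))⁻¹ * Real.sin (j * x) := by
    apply Finset.sum_congr rfl
    intro j _
    rw [div_eq_inv_mul]
  rw [hsum, key]
  have hm1 : 1 ≤ m := by omega
  have hmpos : (0:ℝ) < (m : ℝ) := by exact_mod_cast lt_of_le_of_lt (Nat.zero_le n) hnm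
  have hnpos : (0:ℝ) < (n : ℝ) := by exact_mod_cast hn
  -- bound the middle sum
  have hmid : |∑ i ∈ Finset.Ioc n (m - 1),
      ((((i + 1 : ℕ) : ℝ))⁻¹ - ((i : ℝ))⁻¹) * G (i + 1)|
      ≤ M * (((n : ℝ) + 1)⁻¹ - ((m : ℝ))⁻¹) := by
    calc |∑ i ∈ Finset.Ioc n (m - 1), ((((i + 1 : ℕ) : ℝ))⁻¹ - ((i : ℝ))⁻¹) * G (i + 1)|
        ≤ ∑ i ∈ Finset.Ioc n (m - 1), |((((i + 1 : ℕ) : ℝ))⁻¹ - ((i : ℝ))⁻¹) * G (i + 1)| :=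
          Finset.abs_sum_le_sum_abs _ _
      _ ≤ ∑ i ∈ Finset.Ioc n (m - 1), (((i : ℝ))⁻¹ - ((i : ℝ) + 1)⁻¹) * M := by
          apply Finset.sum_le_sum
          intro i hi
          have hi1 : n < i := (Finset.mem_Ioc.mp hi).1
          have hipos : (0:ℝ) < (i : ℝ) := by exact_mod_cast lt_of_le_of_lt (Nat.zero_le n) hi1
          rw [abs_mul]
          have h1 : |(((i + 1 : ℕ) : ℝ))⁻¹ - ((i : ℝ))⁻¹| = ((i : ℝ))⁻¹ - ((i : ℝ) + 1)⁻¹ := by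
            push_cast
            rw [abs_of_nonpos]
            · ring
            · have : ((i : ℝ) + 1)⁻¹ ≤ ((i : ℝ))⁻¹ := by
                apply inv_anti₀ hipos; linarith
              linarith
          rw [h1]
          apply mul_le_mul_of_nonneg_left (hG (i + 1))
          have : ((i : ℝ) + 1)⁻¹ ≤ ((i : ℝ))⁻¹ := by
            apply inv_anti₀ hipos; linarith
          linarith
      _ = M * (((n : ℝ) + 1)⁻¹ - ((m : ℝ))⁻¹) := by
          rw [← Finset.sum_mul, telescope n (m - 1) (Nat.le_sub_one_of_lt hnm)]
          have : (((m - 1 : ℕ) : ℝ) + 1) = (m : ℝ) := by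
            have := Nat.cast_sub hm1 (R := ℝ)
            push_cast [this]
            ring
          rw [this]
          ring
  have h1 : |((m : ℝ))⁻¹ * G (m + 1)| ≤ ((m : ℝ))⁻¹ * M := by
    rw [abs_mul, abs_of_nonneg (by positivity : (0:ℝ) ≤ ((m : ℝ))⁻¹)]
    exact mul_le_mul_of_nonneg_left (hG (m + 1)) (by positivity)
  have h2 : |(((n + 1 : ℕ) : ℝ))⁻¹ * G (n + 1)| ≤ ((n : ℝ) + 1)⁻¹ * M := by
    rw [abs_mul, abs_of_nonneg (by positivity : (0:ℝ) ≤ (((n + 1 : ℕ) : ℝ))⁻¹)]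
    push_cast
    exact mul_le_mul_of_nonneg_left (hG (n + 1)) (by positivity)
  have habs := abs_sub_abs_le_abs_sub (((m : ℝ))⁻¹ * G (m + 1) - (((n + 1 : ℕ) : ℝ))⁻¹ * G (n + 1))
    (∑ i ∈ Finset.Ioc n (m - 1), ((((i + 1 : ℕ) : ℝ))⁻¹ - ((i : ℝ))⁻¹) * G (i + 1))
  have hfinal : |((m : ℝ))⁻¹ * G (m + 1) - (((n + 1 : ℕ) : ℝ))⁻¹ * G (n + 1)
      - ∑ i ∈ Finset.Ioc n (m - 1), ((((i + 1 : ℕ) : ℝ))⁻¹ - ((i : ℝ))⁻¹) * G (i + 1)|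
      ≤ 2 * M / ((n : ℝ) + 1) := by
    have habc := abs_sub (((m : ℝ))⁻¹ * G (m + 1) - (((n + 1 : ℕ) : ℝ))⁻¹ * G (n + 1))
      (∑ i ∈ Finset.Ioc n (m - 1), ((((i + 1 : ℕ) : ℝ))⁻¹ - ((i : ℝ))⁻¹) * G (i + 1))
    have habd := abs_sub (((m : ℝ))⁻¹ * G (m + 1)) ((((n + 1 : ℕ) : ℝ))⁻¹ * G (n + 1))
    have hminv : ((m : ℝ))⁻¹ * M ≤ ((m : ℝ))⁻¹ * M := le_refl _
    have : |((m : ℝ))⁻¹ * G (m + 1) - (((n + 1 : ℕ) : ℝ))⁻¹ * G (n + 1)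
        - ∑ i ∈ Finset.Ioc n (m - 1), ((((i + 1 : ℕ) : ℝ))⁻¹ - ((i : ℝ))⁻¹) * G (i + 1)|
        ≤ ((m : ℝ))⁻¹ * M + ((n : ℝ) + 1)⁻¹ * M + M * (((n : ℝ) + 1)⁻¹ - ((m : ℝ))⁻¹) := by
      calc _ ≤ |((m : ℝ))⁻¹ * G (m + 1) - (((n + 1 : ℕ) : ℝ))⁻¹ * G (n + 1)|
            + |∑ i ∈ Finset.Ioc n (m - 1), ((((i + 1 : ℕ) : ℝ))⁻¹ - ((i : ℝ))⁻¹) * G (i + 1)| :=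
              abs_sub _ _
        _ ≤ (|((m : ℝ))⁻¹ * G (m + 1)| + |(((n + 1 : ℕ) : ℝ))⁻¹ * G (n + 1)|)
            + M * (((n : ℝ) + 1)⁻¹ - ((m : ℝ))⁻¹) := by
              have h9 := abs_sub (((m : ℝ))⁻¹ * G (m + 1)) ((((n + 1 : ℕ) : ℝ))⁻¹ * G (n + 1))
              linarith [hmid, h9]
        _ ≤ (((m : ℝ))⁻¹ * M + ((n : ℝ) + 1)⁻¹ * M) + M * (((n : ℝ) + 1)⁻¹ - ((m : ℝ))⁻¹) := by
              gcongr
        _ = _ := by ring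
    calc _ ≤ ((m : ℝ))⁻¹ * M + ((n : ℝ) + 1)⁻¹ * M + M * (((n : ℝ) + 1)⁻¹ - ((m : ℝ))⁻¹) := this
      _ = 2 * M / ((n : ℝ) + 1) := by field_simp; ring
  exact hfinal

theorem sin_sum_div_bound (x : ℝ) (hx0 : 0 < x) (hxpi : x ≤ Real.pi)
    (m : ℕ) (hm : 0 < m) :
    |∑ j ∈ Finset.Icc 1 m, Real.sin (j * x) / j| ≤ Real.pi + 2 := by
  have hpi := Real.pi_pos
  have hs : 0 < Real.sin (x / 2) :=
    Real.sin_pos_of_pos_of_lt_pi (by linarith) (by linarith)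
  set n : ℕ := ⌊Real.pi / x⌋₊ with hn
  have hdiv1 : (1 : ℝ) ≤ Real.pi / x := (one_le_div hx0).mpr hxpi
  have hn1 : 1 ≤ n := Nat.le_floor (by exact_mod_cast hdiv1)
  have hnle : (n : ℝ) ≤ Real.pi / x := Nat.floor_le (by positivity)
  have hnlt : Real.pi / x < (n : ℝ) + 1 := by exact_mod_cast Nat.lt_floor_add_one (Real.pi / x)
  -- head bound
  have head : ∀ k : ℕ, k ≤ n → |∑ j ∈ Finset.Icc 1 k, Real.sin (j * x) / j| ≤ Real.pi := by
    intro k hk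
    calc |∑ j ∈ Finset.Icc 1 k, Real.sin (j * x) / j|
        ≤ ∑ j ∈ Finset.Icc 1 k, |Real.sin (j * x) / j| := Finset.abs_sum_le_sum_abs _ _
      _ ≤ ∑ j ∈ Finset.Icc 1 k, x := by
          apply Finset.sum_le_sum
          intro j hj
          have hj1 : 1 ≤ j := (Finset.mem_Icc.mp hj).1
          have hjpos : (0:ℝ) < (j : ℝ) := by exact_mod_cast hj1
          rw [abs_div, abs_of_pos hjpos, div_le_iff₀ hjpos]
          calc |Real.sin (j * x)| ≤ |(j : ℝ) * x| := Real.abs_sin_le_abs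
            _ = (j : ℝ) * x := abs_of_pos (by positivity)
            _ = x * (j : ℝ) := by ring
      _ = k * x := by rw [Finset.sum_const, Nat.card_Icc]; simp [nsmul_eq_mul]
      _ ≤ Real.pi := by
          have hkn : (k : ℝ) ≤ (n : ℝ) := by exact_mod_cast hk
          have : (k : ℝ) ≤ Real.pi / x := le_trans hkn hnle
          calc (k : ℝ) * x ≤ (Real.pi / x) * x := by nlinarith
            _ = Real.pi := by field_simp
  rcases le_or_gt m n with hmn | hmn
  · calc |∑ j ∈ Finset.Icc 1 m, Real.sin (j * x) / j| ≤ Real.pi := head m hmn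
      _ ≤ Real.pi + 2 := by linarith
  · -- split
    have hsplit : ∑ j ∈ Finset.Icc 1 m, Real.sin (j * x) / j
        = (∑ j ∈ Finset.Icc 1 n, Real.sin (j * x) / j)
          + ∑ j ∈ Finset.Ioc n m, Real.sin (j * x) / j := by
      rw [show Finset.Icc 1 m = Finset.Ioc 0 m from rfl,
          show Finset.Icc 1 n = Finset.Ioc 0 n from rfl]
      exact (Finset.sum_Ioc_consecutive _ (Nat.zero_le n) (le_of_lt hmn)).symm
    have hM : (0:ℝ) ≤ (Real.sin (x / 2))⁻¹ := by positivity
    have htail := tail_bound x (Real.sin (x / 2))⁻¹ hM (G_bound x hs) n m hn1 hmn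
    have htail2 : 2 * (Real.sin (x / 2))⁻¹ / ((n : ℝ) + 1) ≤ 2 := by
      have hjordan : x / Real.pi ≤ Real.sin (x / 2) := by
        have := Real.mul_le_sin (x := x / 2) (by linarith) (by linarith)
        calc x / Real.pi = 2 / Real.pi * (x / 2) := by field_simp
          _ ≤ Real.sin (x / 2) := this
      have hkey : 1 ≤ ((n : ℝ) + 1) * Real.sin (x / 2) := by
        have h1 : Real.pi / x ≤ (n : ℝ) + 1 := le_of_lt hnlt
        have h2 : x / Real.pi ≤ Real.sin (x / 2) := hjordan
        calc (1:ℝ) = (Real.pi / x) * (x / Real.pi) := by field_simp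
          _ ≤ ((n : ℝ) + 1) * Real.sin (x / 2) := by
              apply mul_le_mul h1 h2 (by positivity) (by positivity)
      rw [div_le_iff₀ (by positivity : (0:ℝ) < (n : ℝ) + 1)]
      have hsinv : (Real.sin (x / 2))⁻¹ ≤ (n : ℝ) + 1 := by
        rw [inv_le_comm₀ hs (by positivity), inv_eq_one_div,
          div_le_iff₀ (by positivity : (0:ℝ) < (n : ℝ) + 1)]
        linarith [hkey]
      linarith
    rw [hsplit]
    calc |∑ j ∈ Finset.Icc 1 n, Real.sin (j * x) / j + ∑ j ∈ Finset.Ioc n m, Real.sin (j * x) / j|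
        ≤ |∑ j ∈ Finset.Icc 1 n, Real.sin (j * x) / j|
          + |∑ j ∈ Finset.Ioc n m, Real.sin (j * x) / j| := abs_add_le _ _
      _ ≤ Real.pi + 2 * (Real.sin (x / 2))⁻¹ / ((n : ℝ) + 1) := by
          exact add_le_add (head n (le_refl n)) htail
      _ ≤ Real.pi + 2 := by linarith
end

section
/- Let Q_j be the j-th Legendre polynomial and f a C² function on [−1,1]. Then for every j ≥ 1, |∫_{−1}^{1} Q_j(x) f(x) dx| ≤ (2√2 · c)/(j(j+1)(2j+1)^{1/2}), where c = max(2‖f′‖_∞, ‖f″‖_∞). -/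
open Real intervalIntegral

/-- The `j`-th Legendre polynomial via Rodrigues' formula. -/
noncomputable def legendreQ (j : ℕ) (x : ℝ) : ℝ :=
  (1 / (2 ^ j * (Nat.factorial j))) *
    iteratedDeriv j (fun y : ℝ => (y ^ 2 - 1) ^ j) x

open Polynomial

noncomputable def uu (j : ℕ) : Polynomial ℝ := (X^2 - 1)^j

noncomputable def AA (j n : ℕ) : Polynomial ℝ := derivative^[n] (uu j)

@[simp] lemma AA_zero (j : ℕ) : AA j 0 = uu j := rfl

@[simp] lemma derivative_AA (j n : ℕ) : derivative (AA j n) = AA j (n+1) := by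
  simp [AA, Function.iterate_succ_apply']

lemma AA_rec (j : ℕ) (hj : 1 ≤ j) (n : ℕ) :
    (X^2 - 1) * AA j (n+1) =
      (2*C (j:ℝ) - 2*C (n:ℝ)) * X * AA j n
        + C (n:ℝ) * (2*C (j:ℝ) - C (n:ℝ) + 1) * AA j (n-1) := by
  induction n with
  | zero =>
      obtain ⟨m, rfl⟩ := Nat.exists_eq_add_of_le hj
      have h1 : AA (1+m) 1 = derivative (uu (1+m)) := rfl
      rw [h1, uu, derivative_pow, derivative_sub, derivative_X_pow, derivative_one]
      simp only [Nat.cast_zero, C_0, Nat.cast_add, Nat.cast_one, C_add, C_1, AA_zero, uu,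
        Nat.cast_ofNat, map_ofNat, pow_one, Nat.add_sub_cancel, zero_mul, mul_zero, add_zero,
        sub_zero, zero_add]
      rw [show (1+m) - 1 = m from by omega, show (1+m) = m+1 from by omega, pow_succ]
      ring
  | succ n ih =>
      have E := congrArg derivative ih
      simp only [derivative_mul, derivative_add, derivative_sub, derivative_X, derivative_one,
        derivative_X_pow, derivative_C, derivative_ofNat, derivative_AA, Nat.cast_ofNat,
        map_ofNat, pow_one] at E
      rcases n with _ | m
      · simp only [Nat.cast_zero, C_0, zero_mul, mul_zero, add_zero, zero_add,
          Nat.cast_one, C_1, Nat.zero_sub, Nat.sub_self] at E ⊢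
        linear_combination E
      · rw [show (m + 1) - 1 = m from rfl] at E
        simp only [Nat.cast_add, Nat.cast_one, C_add, C_1, Nat.add_sub_cancel] at E ⊢
        linear_combination E

lemma legendre_ode (j : ℕ) (hj : 1 ≤ j) :
    derivative ((X^2 - 1) * AA j (j+1)) = C ((j:ℝ)*(j+1)) * AA j j := by
  have h := AA_rec j hj j
  have h2 := congrArg derivative h
  rw [h2]
  have h3 : derivative (AA j (j-1)) = AA j j := by
    rw [derivative_AA]; congr 1; omega
  simp only [derivative_add, derivative_mul, derivative_sub, derivative_C, derivative_X, h3,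
    derivative_ofNat, derivative_one]
  rw [show (2*C (j:ℝ) - 2*C (j:ℝ)) = 0 from by ring]
  simp only [zero_mul, mul_zero, zero_add, add_zero, map_mul, C_add, C_1]
  ring

lemma AA_factor (j k : ℕ) (hk : k ≤ j) : ∃ r, AA j k = (X^2-1)^(j-k) * r := by
  induction k with
  | zero => exact ⟨1, by simp [uu]⟩
  | succ k ih =>
      obtain ⟨r, hr⟩ := ih (le_of_lt hk)
      refine ⟨C ((j-k : ℕ):ℝ) * 2 * X * r + (X^2-1) * derivative r, ?_⟩
      have h1 : AA j (k+1) = derivative (AA j k) := (derivative_AA j k).symm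
      rw [h1, hr, derivative_mul, derivative_pow, derivative_sub, derivative_X_pow,
        derivative_one]
      have h2 : j - k = (j - (k+1)) + 1 := by omega
      rw [h2]
      simp only [Nat.add_sub_cancel, Nat.cast_ofNat, map_ofNat, pow_one, sub_zero, pow_succ]
      push_cast [show j - k = j - (k+1) + 1 from h2]
      ring

lemma AA_eval_boundary (j k : ℕ) (hk : k < j) {x : ℝ} (hx : x^2 = 1) :
    (AA j k).eval x = 0 := by
  obtain ⟨r, hr⟩ := AA_factor j k (le_of_lt hk)
  obtain ⟨m, hm⟩ : ∃ m, j - k = m + 1 := ⟨j - k - 1, by omega⟩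
  rw [hr, hm]
  have hx' : x * x - 1 = 0 := by linear_combination hx
  simp [pow_succ, hx']

lemma integral_derivative (p : Polynomial ℝ) :
    ∫ x in (-1:ℝ)..1, (derivative p).eval x = p.eval 1 - p.eval (-1) := by
  exact integral_eq_sub_of_hasDerivAt (fun x _ => p.hasDerivAt x)
    ((p.derivative.continuous).intervalIntegrable _ _)

lemma poly_parts (p q : Polynomial ℝ) :
    ∫ x in (-1:ℝ)..1, (derivative p).eval x * q.eval x =
      (p.eval 1 * q.eval 1 - p.eval (-1) * q.eval (-1))
        - ∫ x in (-1:ℝ)..1, p.eval x * (derivative q).eval x := by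
  have h := integral_derivative (p * q)
  simp only [derivative_mul, eval_add, eval_mul] at h
  rw [intervalIntegral.integral_add] at h
  · linarith
  · exact (((p.derivative.continuous).mul (q.continuous))).intervalIntegrable _ _
  · exact (((p.continuous).mul (q.derivative.continuous))).intervalIntegrable _ _

lemma AA_top (j : ℕ) : AA j (2*j) = C (((2*j).factorial : ℕ) : ℝ) := by
  have hm : (uu j).Monic := by
    have h1 : (X^2 - 1 : Polynomial ℝ).Monic := by
      simpa using monic_X_pow_sub_C (1:ℝ) (n := 2) (by norm_num)
    exact h1.pow j
  have hdeg : (uu j).natDegree = 2*j := by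
    have h1 : (X^2 - 1 : Polynomial ℝ).natDegree = 2 := by
      simpa using natDegree_X_pow_sub_C (n := 2) (r := (1:ℝ))
    rw [uu, (by simpa using (monic_X_pow_sub_C (1:ℝ) (n := 2) (by norm_num)) :
      (X^2 - 1 : Polynomial ℝ).Monic).natDegree_pow, h1, mul_comm]
  have hsplit : uu j = X^(2*j) + (uu j - X^(2*j)) := by ring
  have hlow : (derivative^[2*j]) (uu j - X^(2*j)) = 0 := by
    rcases eq_or_ne (uu j - X^(2*j)) 0 with h | h
    · simp [h]
    · refine iterate_derivative_eq_zero ?_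
      have hdlt : (uu j - X^(2*j)).degree < (uu j).degree := by
        refine degree_sub_lt ?_ hm.ne_zero ?_
        · rw [degree_X_pow, degree_eq_natDegree hm.ne_zero, hdeg]
        · rw [hm.leadingCoeff, (monic_X_pow (2*j) : (X^(2*j) : Polynomial ℝ).Monic).leadingCoeff]
      have h2 := natDegree_lt_natDegree h hdlt
      omega
  rw [iterate_derivative_sub] at hlow
  have : AA j (2*j) = derivative^[2*j] (X^(2*j)) := by
    rw [AA]
    exact sub_eq_zero.mp hlow
  rw [this, iterate_derivative_X_pow_eq_C_mul]
  simp [Nat.descFactorial_self]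

lemma shift_integral (j : ℕ) (k : ℕ) (hk : k ≤ j) :
    ∫ x in (-1:ℝ)..1, (AA j j).eval x * (AA j j).eval x =
      (-1:ℝ)^k * ∫ x in (-1:ℝ)..1, (AA j (j-k)).eval x * (AA j (j+k)).eval x := by
  induction k with
  | zero => simp
  | succ k ih =>
      rw [ih (by omega)]
      have hd : AA j (j-k) = derivative (AA j (j-k-1)) := by
        rw [derivative_AA]; congr 1; omega
      have h := poly_parts (AA j (j-k-1)) (AA j (j+k))
      rw [← hd] at h
      rw [AA_eval_boundary j (j-k-1) (by omega) (show (1:ℝ)^2 = 1 by norm_num),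
        AA_eval_boundary j (j-k-1) (by omega) (show ((-1):ℝ)^2 = 1 by norm_num)] at h
      simp only [derivative_AA] at h
      rw [h]
      have e1 : j - k - 1 = j - (k+1) := by omega
      have e2 : j + k + 1 = j + (k+1) := by omega
      rw [e1, e2]
      ring

lemma I_val (j : ℕ) : ∫ x in (-1:ℝ)..1, (1-x^2)^j
    = 2^(2*j+1) * ((j.factorial : ℝ))^2 / (((2*j+1).factorial : ℝ)) := by
  induction j with
  | zero => norm_num [Nat.factorial]
  | succ j ih =>
      have key : ∀ t x2 : ℝ, x2 + t = 1 →
          t^(j+1) + (-(2*x2))*(((j:ℝ)+1)*t^j) = (2*(j:ℝ)+3)*t^(j+1) - (2*(j:ℝ)+2)*t^j := by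
        intro t x2 h
        have hx : x2 = 1 - t := by linarith
        subst hx
        ring
      have hd : ∀ x : ℝ, HasDerivAt (fun x : ℝ => x*(1-x^2)^(j+1))
          ((2*(j:ℝ)+3)*(1-x^2)^(j+1) - (2*(j:ℝ)+2)*(1-x^2)^j) x := by
        intro x
        have h1 : HasDerivAt (fun x : ℝ => 1 - x^2) (-(2*x)) x := by
          simpa using ((hasDerivAt_pow 2 x).const_sub 1)
        have h2 := h1.pow (j+1)
        have h3 : HasDerivAt (fun y : ℝ => y * (1-y^2)^(j+1))
            (1 * (1-x^2)^(j+1) + x * (((j+1:ℕ):ℝ) * (1-x^2)^(j+1-1) * -(2*x))) x :=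
          (hasDerivAt_id x).mul h2
        convert h3 using 1
        have := key (1-x^2) (x^2) (by ring)
        push_cast
        simp only [Nat.add_sub_cancel] at *
        linear_combination -this
      have hc1 : Continuous fun x : ℝ => (1-x^2)^(j+1) :=
        (continuous_const.sub (continuous_pow 2)).pow _
      have hc2 : Continuous fun x : ℝ => (1-x^2)^j :=
        (continuous_const.sub (continuous_pow 2)).pow _
      have hint : ∫ x in (-1:ℝ)..1,
          ((2*(j:ℝ)+3)*(1-x^2)^(j+1) - (2*(j:ℝ)+2)*(1-x^2)^j) = 0 := by
        rw [integral_eq_sub_of_hasDerivAt (fun x _ => hd x)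
          (((continuous_const.mul hc1).sub (continuous_const.mul hc2)).intervalIntegrable _ _)]
        norm_num
      rw [integral_sub (f := fun x => (2*(j:ℝ)+3)*(1-x^2)^(j+1)) (g := fun x => (2*(j:ℝ)+2)*(1-x^2)^j) ((continuous_const.mul hc1).intervalIntegrable _ _)
          ((continuous_const.mul hc2).intervalIntegrable _ _),
        integral_const_mul, integral_const_mul, ih, sub_eq_zero] at hint
      have h23 : (2*(j:ℝ)+3) ≠ 0 := by positivity
      have hI : ∫ x in (-1:ℝ)..1, (1-x^2)^(j+1)
          = (2*(j:ℝ)+2) * (2^(2*j+1) * ((j.factorial : ℝ))^2 / (((2*j+1).factorial : ℝ)))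
            / (2*(j:ℝ)+3) := by
        field_simp at hint ⊢
        linarith [hint]
      rw [hI]
      have hf1 : ((2*(j+1)+1).factorial : ℝ)
          = (2*(j:ℝ)+3) * ((2*(j:ℝ)+2)) * (((2*j+1).factorial : ℝ)) := by
        have : 2*(j+1)+1 = (2*j+2)+1 := by ring
        rw [this, Nat.factorial_succ, Nat.factorial_succ]
        push_cast
        ring
      have hf2 : (((j+1).factorial : ℝ)) = ((j:ℝ)+1) * ((j.factorial : ℝ)) := by
        rw [Nat.factorial_succ]; push_cast; ring
      rw [hf1, hf2]
      have hfac : ((2*j+1).factorial : ℝ) ≠ 0 := by positivity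
      field_simp
      ring

lemma iteratedDeriv_polyeval (p : Polynomial ℝ) (n : ℕ) :
    iteratedDeriv n (fun x => p.eval x) = fun x => (derivative^[n] p).eval x := by
  induction n with
  | zero => rfl
  | succ n ih =>
      rw [iteratedDeriv_succ, ih]
      funext x
      rw [Function.iterate_succ_apply']
      exact Polynomial.deriv _

lemma Q_eval (j : ℕ) (x : ℝ) :
    legendreQ j x = (1 / (2^j * (j.factorial : ℝ))) * (AA j j).eval x := by
  unfold legendreQ
  have h1 : (fun y : ℝ => (y ^ 2 - 1) ^ j) = fun y => (uu j).eval y := by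
    funext y; simp [uu]
  rw [h1, iteratedDeriv_polyeval]
  rfl

lemma normQsq (j : ℕ) (hj : 1 ≤ j) :
    ∫ x in (-1:ℝ)..1, (legendreQ j x)^2 = 2/(2*(j:ℝ)+1) := by
  have hc : ∀ x : ℝ, (legendreQ j x)^2
      = (1 / (2^j * (j.factorial : ℝ)))^2 * ((AA j j).eval x * (AA j j).eval x) := by
    intro x; rw [Q_eval]; ring
  simp only [hc]
  rw [integral_const_mul, shift_integral j j le_rfl]
  have h0 : AA j (j - j) = uu j := by rw [Nat.sub_self]; rfl
  have h2 : AA j (j + j) = C (((2*j).factorial : ℕ) : ℝ) := by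
    rw [← two_mul, AA_top]
  rw [h0, h2]
  have h3 : ∀ x : ℝ, (uu j).eval x * (C (((2*j).factorial : ℕ) : ℝ)).eval x
      = ((2*j).factorial : ℝ) * ((-1:ℝ)^j * (1 - x^2)^j) := by
    intro x
    simp only [uu, eval_mul, eval_pow, eval_sub, eval_X, eval_one, eval_C, eval_ofNat]
    rw [show (x^2 - 1) = (-1) * (1 - x^2) by ring, mul_pow]
    ring
  simp only [h3]
  rw [integral_const_mul, integral_const_mul, I_val]
  have hf : ((2*j+1).factorial : ℝ) = (2*(j:ℝ)+1) * (((2*j).factorial : ℝ)) := by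
    rw [Nat.factorial_succ]; push_cast; ring
  rw [hf]
  have e1 : ((2:ℝ))^(2*j+1) = 2 * ((2:ℝ)^j)^2 := by
    rw [pow_succ, mul_comm 2 j, pow_mul]; ring
  rw [e1]
  have p1 : ((2:ℝ)^j) ≠ 0 := by positivity
  have p2 : ((j.factorial : ℝ)) ≠ 0 := by positivity
  have p3 : ((2*j).factorial : ℝ) ≠ 0 := by positivity
  have p4 : (2*(j:ℝ)+1) ≠ 0 := by positivity
  have hneg : ((-1:ℝ))^(j*2) = 1 := by rw [mul_comm, pow_mul]; norm_num
  field_simp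
  ring_nf
  rw [hneg]

lemma parts_fun (p : Polynomial ℝ) (g g' : ℝ → ℝ)
    (hg : ∀ x, HasDerivAt g (g' x) x) (hg' : Continuous g') :
    ∫ x in (-1:ℝ)..1, (derivative p).eval x * g x =
      (p.eval 1 * g 1 - p.eval (-1) * g (-1))
        - ∫ x in (-1:ℝ)..1, p.eval x * g' x := by
  have hgc : Continuous g := continuous_iff_continuousAt.mpr fun x => (hg x).continuousAt
  have hprod : ∀ x ∈ Set.uIcc (-1:ℝ) 1, HasDerivAt (fun x => p.eval x * g x)
      ((derivative p).eval x * g x + p.eval x * g' x) x :=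
    fun x _ => (p.hasDerivAt x).mul (hg x)
  have h := integral_eq_sub_of_hasDerivAt hprod
    ((((p.derivative.continuous).mul hgc).add ((p.continuous).mul hg')).intervalIntegrable _ _)
  rw [integral_add (f := fun x => (derivative p).eval x * g x) (g := fun x => p.eval x * g' x) (((p.derivative.continuous).mul hgc).intervalIntegrable _ _)
    (((p.continuous).mul hg').intervalIntegrable _ _)] at h
  linarith

set_option maxHeartbeats 1000000 in
theorem legendre_integral_bound (f : ℝ → ℝ) (hf : ContDiff ℝ 2 f)
    (j : ℕ) (hj : 1 ≤ j) :
    |∫ x in (-1 : ℝ)..1, legendreQ j x * f x| ≤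
      (2 * Real.sqrt 2 *
          max (2 * ⨆ x : Set.Icc (-1 : ℝ) 1, |deriv f x|)
            (⨆ x : Set.Icc (-1 : ℝ) 1, |deriv (deriv f) x|)) /
        (j * (j + 1) * Real.sqrt (2 * j + 1)) := by
  -- smoothness facts
  have hf2 : ContDiff ℝ ((1:WithTop ℕ∞)+1) f := by
    have : ((1:WithTop ℕ∞)+1) = 2 := by norm_num
    rw [this]; exact hf
  have hd1 : Differentiable ℝ f := hf.differentiable (by norm_num)
  have hcd1 : ContDiff ℝ 1 (deriv f) := (contDiff_succ_iff_deriv.mp hf2).2.2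
  have hd2 : Differentiable ℝ (deriv f) := (contDiff_one_iff_deriv.mp hcd1).1
  have hc2 : Continuous (deriv (deriv f)) := (contDiff_one_iff_deriv.mp hcd1).2
  have hc1 : Continuous (deriv f) := hd2.continuous
  have hc0 : Continuous f := hd1.continuous
  -- sup bounds
  set M1 := ⨆ x : Set.Icc (-1:ℝ) 1, |deriv f x| with hM1def
  set M2 := ⨆ x : Set.Icc (-1:ℝ) 1, |deriv (deriv f) x| with hM2def
  have hbdd1 : BddAbove (Set.range fun x : Set.Icc (-1:ℝ) 1 => |deriv f x|) := by
    obtain ⟨B, hB⟩ := isCompact_Icc.exists_bound_of_continuousOn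
      (hc1.continuousOn (s := Set.Icc (-1:ℝ) 1))
    refine ⟨B, ?_⟩
    rintro y ⟨x, rfl⟩
    simpa [Real.norm_eq_abs] using hB x x.2
  have hbdd2 : BddAbove (Set.range fun x : Set.Icc (-1:ℝ) 1 => |deriv (deriv f) x|) := by
    obtain ⟨B, hB⟩ := isCompact_Icc.exists_bound_of_continuousOn
      (hc2.continuousOn (s := Set.Icc (-1:ℝ) 1))
    refine ⟨B, ?_⟩
    rintro y ⟨x, rfl⟩
    simpa [Real.norm_eq_abs] using hB x x.2
  have hM1 : ∀ x ∈ Set.Icc (-1:ℝ) 1, |deriv f x| ≤ M1 :=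
    fun x hx => le_ciSup hbdd1 (⟨x, hx⟩ : Set.Icc (-1:ℝ) 1)
  have hM2 : ∀ x ∈ Set.Icc (-1:ℝ) 1, |deriv (deriv f) x| ≤ M2 :=
    fun x hx => le_ciSup hbdd2 (⟨x, hx⟩ : Set.Icc (-1:ℝ) 1)
  have hM1nn : 0 ≤ M1 := le_trans (abs_nonneg _) (hM1 0 (by norm_num))
  have hM2nn : 0 ≤ M2 := le_trans (abs_nonneg _) (hM2 0 (by norm_num))
  set c := max (2*M1) M2 with hcdef
  have hcnn : 0 ≤ c := le_trans hM2nn (le_max_right _ _)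
  have hc1c : 2*M1 ≤ c := le_max_left _ _
  have hc2c : M2 ≤ c := le_max_right _ _
  -- polynomial setup
  set QP : Polynomial ℝ := C (1 / (2^j * (j.factorial : ℝ))) * AA j j with hQPdef
  have hQ : ∀ x, legendreQ j x = QP.eval x := by
    intro x; rw [Q_eval, hQPdef, eval_mul, eval_C]
  have hODE : derivative ((X^2 - 1) * derivative QP) = C ((j:ℝ)*((j:ℝ)+1)) * QP := by
    rw [hQPdef, derivative_C_mul, derivative_AA, mul_left_comm, derivative_C_mul,
      legendre_ode j hj, mul_left_comm]
  set W : Polynomial ℝ := (X^2 - 1) * derivative QP with hWdef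
  have hWeval : ∀ x : ℝ, W.eval x = (x^2 - 1) * (derivative QP).eval x := by
    intro x; rw [hWdef]; simp
  have hWb1 : W.eval 1 = 0 := by rw [hWeval]; norm_num
  have hWb2 : W.eval (-1) = 0 := by rw [hWeval]; norm_num
  -- step 1
  have step1 : ((j:ℝ)*((j:ℝ)+1)) * ∫ x in (-1:ℝ)..1, QP.eval x * f x
      = - ∫ x in (-1:ℝ)..1, W.eval x * deriv f x := by
    have h := parts_fun W f (deriv f) (fun x => (hd1 x).hasDerivAt) hc1
    rw [hWdef] at h
    rw [hODE] at h
    rw [← hWdef, hWb1, hWb2] at h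
    have h2 : ∫ x in (-1:ℝ)..1, (C ((j:ℝ)*((j:ℝ)+1)) * QP).eval x * f x
        = ((j:ℝ)*((j:ℝ)+1)) * ∫ x in (-1:ℝ)..1, QP.eval x * f x := by
      rw [← integral_const_mul]
      congr 1; funext x; rw [eval_mul, eval_C]; ring
    rw [h2] at h
    rw [h]; ring
  -- step 2
  have hg' : ∀ x : ℝ, HasDerivAt (fun x : ℝ => (x^2 - 1) * deriv f x)
      (2*x*deriv f x + (x^2 - 1)*deriv (deriv f) x) x := by
    intro x
    have h1 : HasDerivAt (fun x : ℝ => x^2 - 1) (2*x) x := by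
      simpa using (hasDerivAt_pow 2 x).sub_const 1
    exact h1.mul ((hd2 x).hasDerivAt)
  have hgcont : Continuous fun x : ℝ => 2*x*deriv f x + (x^2 - 1)*deriv (deriv f) x := by
    apply Continuous.add
    · exact (continuous_const.mul continuous_id).mul hc1
    · exact ((continuous_pow 2).sub continuous_const).mul hc2
  have step2 : ∫ x in (-1:ℝ)..1, W.eval x * deriv f x
      = - ∫ x in (-1:ℝ)..1, QP.eval x * (2*x*deriv f x + (x^2 - 1)*deriv (deriv f) x) := by
    have h := parts_fun QP (fun x => (x^2 - 1) * deriv f x)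
      (fun x => 2*x*deriv f x + (x^2 - 1)*deriv (deriv f) x) hg' hgcont
    norm_num at h
    have h2 : ∫ x in (-1:ℝ)..1, W.eval x * deriv f x
        = ∫ x in (-1:ℝ)..1, (derivative QP).eval x * ((x^2 - 1) * deriv f x) := by
      congr 1; funext x; rw [hWeval]; ring
    rw [h2, h]
  -- combination
  have key : ((j:ℝ)*((j:ℝ)+1)) * ∫ x in (-1:ℝ)..1, legendreQ j x * f x
      = ∫ x in (-1:ℝ)..1, QP.eval x * (2*x*deriv f x + (x^2 - 1)*deriv (deriv f) x) := by
    have e : ∫ x in (-1:ℝ)..1, legendreQ j x * f x = ∫ x in (-1:ℝ)..1, QP.eval x * f x := by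
      congr 1; funext x; rw [hQ]
    rw [e, step1, step2]; ring
  -- pointwise bound on the bracket
  have hbr : ∀ x ∈ Set.Icc (-1:ℝ) 1,
      |2*x*deriv f x + (x^2 - 1)*deriv (deriv f) x| ≤ (5/4)*c := by
    intro x hx
    have hx1 : |x| ≤ 1 := abs_le.mpr ⟨hx.1, hx.2⟩
    have e1 : |2*x*deriv f x + (x^2 - 1)*deriv (deriv f) x|
        ≤ |2*x*deriv f x| + |(x^2-1)*deriv (deriv f) x| := abs_add_le _ _
    have e2 : |2*x*deriv f x| = 2 * |x| * |deriv f x| := by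
      rw [abs_mul, abs_mul]; norm_num
    have e3 : |(x^2-1)*deriv (deriv f) x| = (1-x^2)*|deriv (deriv f) x| := by
      rw [abs_mul, abs_of_nonpos (by nlinarith [sq_abs x, abs_nonneg x, hx1] : x^2 - 1 ≤ 0)]
      ring
    have b1 := hM1 x hx
    have b2 := hM2 x hx
    have hax := abs_nonneg x
    have haf := abs_nonneg (deriv f x)
    have haf2 := abs_nonneg (deriv (deriv f) x)
    have hsq := sq_abs x
    nlinarith [sq_nonneg (|x| - 1/2), mul_le_mul_of_nonneg_left b1 hax,
      mul_le_mul_of_nonneg_left b2 (by nlinarith : (0:ℝ) ≤ 1 - x^2)]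
  -- L¹ bound on QP
  set s := Real.sqrt (2*(j:ℝ)+1) with hsdef
  have hspos : 0 < s := Real.sqrt_pos.mpr (by positivity)
  have hs2 : s^2 = 2*(j:ℝ)+1 := Real.sq_sqrt (by positivity)
  have hQint : ∫ x in (-1:ℝ)..1, (QP.eval x)^2 = 2/(2*(j:ℝ)+1) := by
    rw [← normQsq j hj]
    congr 1; funext x; rw [hQ]
  have hL1 : ∫ x in (-1:ℝ)..1, |QP.eval x| ≤ 2/s := by
    have hpt : ∀ x : ℝ, |QP.eval x| ≤ (s/2)*(QP.eval x)^2 + 1/(2*s) := by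
      intro x
      have h2s : (0:ℝ) < 2*s := by positivity
      have key2 : 2*s*|QP.eval x| ≤ s^2*(QP.eval x)^2 + 1 := by
        nlinarith [sq_nonneg (s * |QP.eval x| - 1), sq_abs (QP.eval x)]
      calc |QP.eval x| = (2*s*|QP.eval x|)/(2*s) := by field_simp
        _ ≤ (s^2*(QP.eval x)^2 + 1)/(2*s) := (div_le_div_iff_of_pos_right h2s).mpr key2
        _ = (s/2)*(QP.eval x)^2 + 1/(2*s) := by field_simp
    have hmono : ∫ x in (-1:ℝ)..1, |QP.eval x|
        ≤ ∫ x in (-1:ℝ)..1, ((s/2)*(QP.eval x)^2 + 1/(2*s)) := by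
      apply integral_mono_on (by norm_num)
      · exact (QP.continuous.abs).intervalIntegrable _ _
      · exact ((continuous_const.mul (QP.continuous.pow 2)).add continuous_const).intervalIntegrable _ _
      · exact fun x _ => hpt x
    have heval : ∫ x in (-1:ℝ)..1, ((s/2)*(QP.eval x)^2 + 1/(2*s)) = 2/s := by
      rw [integral_add (f := fun x => (s/2)*(QP.eval x)^2) (g := fun _ => 1/(2*s)) ((continuous_const.mul (QP.continuous.pow 2)).intervalIntegrable _ _)
        (continuous_const.intervalIntegrable _ _), integral_const_mul, hQint, integral_const]
      rw [show ((1:ℝ) - (-1)) = 2 by norm_num]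
      rw [smul_eq_mul]
      rw [show (2*(j:ℝ)+1) = s^2 from hs2.symm]
      have hsne : s ≠ 0 := ne_of_gt hspos
      rw [pow_two]
      field_simp
      ring
    linarith
  -- final assembly
  have habs : |∫ x in (-1:ℝ)..1, QP.eval x * (2*x*deriv f x + (x^2 - 1)*deriv (deriv f) x)|
      ≤ (5/4)*c * (2/s) := by
    have h1 : |∫ x in (-1:ℝ)..1, QP.eval x * (2*x*deriv f x + (x^2 - 1)*deriv (deriv f) x)|
        ≤ ∫ x in (-1:ℝ)..1, |QP.eval x * (2*x*deriv f x + (x^2 - 1)*deriv (deriv f) x)| :=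
      abs_integral_le_integral_abs (by norm_num)
    have h2 : ∫ x in (-1:ℝ)..1, |QP.eval x * (2*x*deriv f x + (x^2 - 1)*deriv (deriv f) x)|
        ≤ ∫ x in (-1:ℝ)..1, (5/4)*c * |QP.eval x| := by
      apply integral_mono_on (by norm_num)
      · exact ((QP.continuous.mul hgcont).abs).intervalIntegrable _ _
      · exact (continuous_const.mul (QP.continuous.abs)).intervalIntegrable _ _
      · intro x hx
        rw [abs_mul]
        calc |QP.eval x| * |2*x*deriv f x + (x^2 - 1)*deriv (deriv f) x|
            ≤ |QP.eval x| * ((5/4)*c) :=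
              mul_le_mul_of_nonneg_left (hbr x hx) (abs_nonneg _)
          _ = (5/4)*c * |QP.eval x| := by ring
    have h3 : ∫ x in (-1:ℝ)..1, (5/4)*c * |QP.eval x|
        ≤ (5/4)*c * (2/s) := by
      rw [integral_const_mul]
      exact mul_le_mul_of_nonneg_left hL1 (by positivity)
    linarith
  have hjj : (0:ℝ) < (j:ℝ)*((j:ℝ)+1) := by
    have : (1:ℝ) ≤ (j:ℝ) := by exact_mod_cast hj
    nlinarith
  have hfin : |∫ x in (-1:ℝ)..1, legendreQ j x * f x|
      ≤ (5/4)*c * (2/s) / ((j:ℝ)*((j:ℝ)+1)) := by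
    rw [le_div_iff₀ hjj]
    calc |∫ x in (-1:ℝ)..1, legendreQ j x * f x| * ((j:ℝ)*((j:ℝ)+1))
        = |((j:ℝ)*((j:ℝ)+1)) * ∫ x in (-1:ℝ)..1, legendreQ j x * f x| := by
          rw [abs_mul, abs_of_pos hjj]; ring
      _ = |∫ x in (-1:ℝ)..1, QP.eval x * (2*x*deriv f x + (x^2 - 1)*deriv (deriv f) x)| := by
          rw [key]
      _ ≤ (5/4)*c * (2/s) := habs
  refine le_trans hfin ?_
  have hsqrt2 : (5/4 : ℝ) ≤ Real.sqrt 2 := by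
    nlinarith [Real.sq_sqrt (show (0:ℝ) ≤ 2 by norm_num), Real.sqrt_nonneg 2]
  rw [div_le_div_iff₀ (by positivity) (by positivity)]
  have expand : (5/4)*c * (2/s) * ((j:ℝ)*((j:ℝ)+1)*s) = (5/2)*c*((j:ℝ)*((j:ℝ)+1)) := by
    field_simp
    ring
  rw [expand]
  nlinarith [mul_le_mul_of_nonneg_left hsqrt2 hcnn, Real.sqrt_nonneg 2]
end

section
/- Let X be an ℝ^d-valued random variable with bounded density f, k ∈ L¹(ℝ) a symmetric kernel, h ∈ (0,∞)^d, and ψ ∈ L²(ℝ^d). Then E[(k_h ∗ ψ)(X)²] ≤ ‖f‖_∞ ‖k‖_{L¹(ℝ)}^{2d} ‖ψ‖_{L²(ℝ^d)}². -/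
open MeasureTheory Finset
open scoped ENNReal

-- Cauchy–Schwarz for lintegral in the weighted form (∫ a b)² ≤ (∫ a)(∫ a b²)
lemma lintegral_cs_aux {α : Type*} [MeasurableSpace α] {μ : Measure α} {a b : α → ℝ≥0∞}
    (ha : AEMeasurable a μ) (hb : AEMeasurable b μ) :
    (∫⁻ x, a x * b x ∂μ) ^ 2 ≤ (∫⁻ x, a x ∂μ) * ∫⁻ x, a x * (b x) ^ 2 ∂μ := by
  have key : ∀ x, a x * b x = (a x) ^ (1/2 : ℝ) * (a x * (b x) ^ 2) ^ (1/2 : ℝ) := by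
    intro x
    rw [ENNReal.mul_rpow_of_nonneg _ _ (by norm_num : (0:ℝ) ≤ 1/2),
      ← ENNReal.rpow_natCast (b x) 2, ← ENNReal.rpow_mul, ← mul_assoc,
      ← ENNReal.rpow_add_of_nonneg _ _ (by norm_num) (by norm_num)]
    norm_num
  have H := ENNReal.lintegral_mul_norm_pow_le (μ := μ) ha (ha.mul (hb.pow_const 2))
    (by norm_num : (0:ℝ) ≤ 1/2) (by norm_num : (0:ℝ) ≤ 1/2) (by norm_num)
  calc (∫⁻ x, a x * b x ∂μ) ^ 2
      = (∫⁻ x, (a x) ^ (1/2:ℝ) * (a x * (b x) ^ 2) ^ (1/2:ℝ) ∂μ) ^ 2 := by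
        congr 1; exact lintegral_congr key
    _ ≤ ((∫⁻ x, a x ∂μ) ^ (1/2:ℝ) * (∫⁻ x, a x * (b x) ^ 2 ∂μ) ^ (1/2:ℝ)) ^ 2 :=
        pow_le_pow_left₀ (zero_le) H 2
    _ = _ := by
        rw [mul_pow, ← ENNReal.rpow_natCast (_ ^ (1/2:ℝ)) 2,
          ← ENNReal.rpow_natCast (_ ^ (1/2:ℝ)) 2, ← ENNReal.rpow_mul, ← ENNReal.rpow_mul]
        norm_num

theorem conv_estimate_second_moment (d : ℕ) (hd : 0 < d)
    (f : (Fin d → ℝ) → ℝ) (M : ℝ)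
    (hf_nonneg : ∀ y, 0 ≤ f y) (hf_bound : ∀ y, f y ≤ M)
    (hf_int : ∫ y : Fin d → ℝ, f y = 1)
    (k : ℝ → ℝ) (hk_meas : Measurable k) (hk_symm : ∀ y, k (-y) = k y)
    (hk_L1 : Integrable k)
    (h : Fin d → ℝ) (hh : ∀ q, 0 < h q)
    (ψ : (Fin d → ℝ) → ℝ) (hψ_meas : Measurable ψ) (hψ_L2 : MemLp ψ 2 volume) :
    (∫ x : Fin d → ℝ,
        (∫ y : Fin d → ℝ,
          (∏ q : Fin d, (1 / h q) * k (y q / h q)) * ψ (x - y)) ^ 2 * f x) ≤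
      M * (∫ y : ℝ, |k y|) ^ (2 * d) * ∫ x : Fin d → ℝ, (ψ x) ^ 2 := by
  set K : (Fin d → ℝ) → ℝ := fun y => ∏ q : Fin d, (1 / h q) * k (y q / h q) with hKdef
  set g : (Fin d → ℝ) → ℝ := fun x => ∫ y : Fin d → ℝ, K y * ψ (x - y) with hgdef
  set A : ℝ := ∫ y : ℝ, |k y| with hAdef
  have hA_nonneg : 0 ≤ A := integral_nonneg fun _ => abs_nonneg _
  have hM : 0 ≤ M := le_trans (hf_nonneg fun _ => 0) (hf_bound _)
  have hψ2_nonneg : 0 ≤ ∫ x : Fin d → ℝ, ψ x ^ 2 := integral_nonneg fun _ => sq_nonneg _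
  -- measurability of K
  have hK_meas : Measurable K := by
    apply Finset.measurable_prod
    intro q _
    exact measurable_const.mul (hk_meas.comp ((measurable_pi_apply q).div_const _))
  -- integrability of K
  have hKq : ∀ q : Fin d, Integrable (fun t : ℝ => (1 / h q) * k (t / h q)) := fun q =>
    (hk_L1.comp_div (hh q).ne').const_mul _
  have hKint : Integrable K := Integrable.fintype_prod hKq
  -- ∫ |K| = A ^ d
  have hKabs : (∫ y : Fin d → ℝ, |K y|) = A ^ d := by
    have e1 : ∀ y : Fin d → ℝ, |K y| = ∏ q : Fin d, |(1 / h q) * k (y q / h q)| := by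
      intro y; rw [hKdef]; rw [Finset.abs_prod]
    simp_rw [e1]
    rw [volume_pi, integral_fintype_prod_eq_prod (ι := Fin d) (f := fun q t => |(1 / h q) * k (t / h q)|)]
    have e2 : ∀ q : Fin d, (∫ t : ℝ, |(1 / h q) * k (t / h q)|) = A := by
      intro q
      have h0 : (0:ℝ) < 1 / h q := one_div_pos.mpr (hh q)
      simp_rw [abs_mul, abs_of_pos h0]
      rw [integral_const_mul, Measure.integral_comp_div (fun t => |k t|) (h q), smul_eq_mul,
        abs_of_pos (hh q), ← mul_assoc, one_div, inv_mul_cancel₀ (hh q).ne', one_mul, hAdef]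
    simp_rw [e2]
    simp [Finset.prod_const]
  set B : ℝ≥0∞ := ENNReal.ofReal (A ^ d) with hBdef
  have hB_fin : B ≠ ⊤ := ENNReal.ofReal_ne_top
  have hA_e : (∫⁻ y : Fin d → ℝ, ENNReal.ofReal |K y|) = B := by
    rw [← ofReal_integral_eq_lintegral_ofReal hKint.abs
      (Filter.Eventually.of_forall fun y => abs_nonneg _), hKabs]
  -- ψ² facts
  have hψ2_int : Integrable (fun x : Fin d → ℝ => ψ x ^ 2) := hψ_L2.integrable_sq
  have heψ2 : (∫⁻ x : Fin d → ℝ, ENNReal.ofReal (ψ x ^ 2)) =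
      ENNReal.ofReal (∫ x : Fin d → ℝ, ψ x ^ 2) :=
    (ofReal_integral_eq_lintegral_ofReal hψ2_int
      (Filter.Eventually.of_forall fun x => sq_nonneg _)).symm
  -- measurability of g
  have hprod_meas : Measurable (fun p : (Fin d → ℝ) × (Fin d → ℝ) => K p.2 * ψ (p.1 - p.2)) :=
    (hK_meas.comp measurable_snd).mul (hψ_meas.comp (measurable_fst.sub measurable_snd))
  have hg_sm : StronglyMeasurable g :=
    hprod_meas.stronglyMeasurable.integral_prod_right'
  -- pointwise bound
  set Φ : (Fin d → ℝ) → ℝ≥0∞ :=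
    fun x => ∫⁻ y : Fin d → ℝ, ENNReal.ofReal |K y| * ENNReal.ofReal (ψ (x - y) ^ 2) with hΦdef
  have key1 : ∀ x : Fin d → ℝ, ENNReal.ofReal (g x ^ 2) ≤ B * Φ x := by
    intro x
    have h1 : ENNReal.ofReal |g x|
        ≤ ∫⁻ y : Fin d → ℝ, ENNReal.ofReal |K y| * ENNReal.ofReal |ψ (x - y)| := by
      calc ENNReal.ofReal |g x| = ‖g x‖ₑ := (Real.enorm_eq_ofReal_abs _).symm
        _ ≤ ∫⁻ y : Fin d → ℝ, ‖K y * ψ (x - y)‖ₑ :=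
            enorm_integral_le_lintegral_enorm _
        _ = _ := by
            simp_rw [Real.enorm_eq_ofReal_abs, abs_mul, ENNReal.ofReal_mul (abs_nonneg _)]
    have ha : AEMeasurable (fun y : Fin d → ℝ => ENNReal.ofReal |K y|) volume :=
      (hK_meas.abs.ennreal_ofReal).aemeasurable
    have hb : AEMeasurable (fun y : Fin d → ℝ => ENNReal.ofReal |ψ (x - y)|) volume :=
      (((hψ_meas.comp ((measurable_const (a := x)).sub measurable_id)).abs).ennreal_ofReal).aemeasurable
    calc ENNReal.ofReal (g x ^ 2)
        = (ENNReal.ofReal |g x|) ^ 2 := by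
          rw [← ENNReal.ofReal_pow (abs_nonneg _), sq_abs]
      _ ≤ (∫⁻ y : Fin d → ℝ, ENNReal.ofReal |K y| * ENNReal.ofReal |ψ (x - y)|) ^ 2 :=
          pow_le_pow_left₀ (zero_le) h1 2
      _ ≤ (∫⁻ y : Fin d → ℝ, ENNReal.ofReal |K y|) *
            ∫⁻ y : Fin d → ℝ, ENNReal.ofReal |K y| * (ENNReal.ofReal |ψ (x - y)|) ^ 2 :=
          lintegral_cs_aux ha hb
      _ = B * Φ x := by
          rw [hA_e]
          congr 1
          apply lintegral_congr
          intro y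
          rw [← ENNReal.ofReal_pow (abs_nonneg _), sq_abs]
  -- integral of Φ
  have hΦint : (∫⁻ x : Fin d → ℝ, Φ x) = B * ENNReal.ofReal (∫ x : Fin d → ℝ, ψ x ^ 2) := by
    have hswap : (∫⁻ x : Fin d → ℝ, Φ x) =
        ∫⁻ y : Fin d → ℝ, ∫⁻ x : Fin d → ℝ,
          ENNReal.ofReal |K y| * ENNReal.ofReal (ψ (x - y) ^ 2) := by
      apply lintegral_lintegral_swap
      apply Measurable.aemeasurable
      exact ((hK_meas.comp measurable_snd).abs.ennreal_ofReal).mul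
        (((hψ_meas.comp (measurable_fst.sub measurable_snd)).pow_const 2).ennreal_ofReal)
    rw [hswap]
    have inner : ∀ y : Fin d → ℝ,
        (∫⁻ x : Fin d → ℝ, ENNReal.ofReal |K y| * ENNReal.ofReal (ψ (x - y) ^ 2)) =
        ENNReal.ofReal |K y| * ENNReal.ofReal (∫ x : Fin d → ℝ, ψ x ^ 2) := by
      intro y
      have hmy : Measurable fun x : Fin d → ℝ => ENNReal.ofReal (ψ (x - y) ^ 2) :=
        ((hψ_meas.comp (measurable_id.sub measurable_const)).pow_const 2).ennreal_ofReal
      rw [lintegral_const_mul _ hmy]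
      congr 1
      have htr : (∫⁻ x : Fin d → ℝ, ENNReal.ofReal (ψ (x - y) ^ 2)) =
          ∫⁻ x : Fin d → ℝ, ENNReal.ofReal (ψ x ^ 2) :=
        (measurePreserving_sub_right (volume : Measure (Fin d → ℝ)) y).lintegral_comp
          ((hψ_meas.pow_const 2).ennreal_ofReal)
      rw [htr, heψ2]
    simp_rw [inner]
    rw [lintegral_mul_const _ (hK_meas.abs.ennreal_ofReal), hA_e]
  -- L² bound on g
  have hgL2 : (∫⁻ x : Fin d → ℝ, ENNReal.ofReal (g x ^ 2))
      ≤ B * (B * ENNReal.ofReal (∫ x : Fin d → ℝ, ψ x ^ 2)) := by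
    calc (∫⁻ x : Fin d → ℝ, ENNReal.ofReal (g x ^ 2))
        ≤ ∫⁻ x : Fin d → ℝ, B * Φ x := lintegral_mono key1
      _ = B * ∫⁻ x : Fin d → ℝ, Φ x := by
          rw [lintegral_const_mul']; exact hB_fin
      _ = _ := by rw [hΦint]
  have hT_fin : B * (B * ENNReal.ofReal (∫ x : Fin d → ℝ, ψ x ^ 2)) ≠ ⊤ := by
    finiteness
  -- g² integrable
  have hg2_int : Integrable (fun x : Fin d → ℝ => g x ^ 2) := by
    refine ⟨((hg_sm.pow 2).aestronglyMeasurable), ?_⟩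
    have e : ∀ x : Fin d → ℝ, ‖g x ^ 2‖ₑ = ENNReal.ofReal (g x ^ 2) := by
      intro x; rw [Real.enorm_eq_ofReal_abs, abs_of_nonneg (sq_nonneg _)]
    show (∫⁻ x : Fin d → ℝ, ‖g x ^ 2‖ₑ) < ⊤
    simp_rw [e]
    exact lt_of_le_of_lt hgL2 (lt_top_iff_ne_top.mpr hT_fin)
  -- ∫ g² ≤ (A^d)² ∫ψ²
  have hg2_bound : (∫ x : Fin d → ℝ, g x ^ 2) ≤ (A ^ d) ^ 2 * ∫ x : Fin d → ℝ, ψ x ^ 2 := by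
    rw [integral_eq_lintegral_of_nonneg_ae (Filter.Eventually.of_forall fun x => sq_nonneg _)
      ((hg_sm.pow 2).aestronglyMeasurable)]
    have h2 := ENNReal.toReal_mono hT_fin hgL2
    refine h2.trans_eq ?_
    rw [ENNReal.toReal_mul, ENNReal.toReal_mul, hBdef, ENNReal.toReal_ofReal (by positivity),
      ENNReal.toReal_ofReal hψ2_nonneg]
    ring
  -- conclude
  calc (∫ x : Fin d → ℝ, g x ^ 2 * f x)
      ≤ ∫ x : Fin d → ℝ, M * g x ^ 2 := by
        apply integral_mono_of_nonneg
        · exact Filter.Eventually.of_forall fun x => mul_nonneg (sq_nonneg _) (hf_nonneg x)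
        · exact hg2_int.const_mul M
        · exact Filter.Eventually.of_forall fun x => by
            show g x ^ 2 * f x ≤ M * g x ^ 2
            rw [mul_comm M]
            exact mul_le_mul_of_nonneg_left (hf_bound x) (sq_nonneg _)
    _ = M * ∫ x : Fin d → ℝ, g x ^ 2 := integral_const_mul M _
    _ ≤ M * ((A ^ d) ^ 2 * ∫ x : Fin d → ℝ, ψ x ^ 2) :=
        mul_le_mul_of_nonneg_left hg2_bound hM
    _ = M * A ^ (2 * d) * ∫ x : Fin d → ℝ, ψ x ^ 2 := by
        rw [← pow_mul, mul_comm d 2]; ring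
end
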